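/- In the braid group B_{n+1}, the element D^n_1 U^n_1 = (σ_1 σ_2 ⋯ σ_n)(σ_n σ_{n-1} ⋯ σ_1) commutes with every element of the subgroup generated by σ_2, ..., σ_n. -/

import Mathlib

lemma comm_prod {G : Type*} [Group G] (σ : ℕ → G) (g : G) (l : List ℕ)
    (h : ∀ k ∈ l, σ k * g = g * σ k) :
    (l.map σ).prod * g = g * (l.map σ).prod := by
  induction l with
  | nil => simp
  | cons a t ih =>
    simp only [List.map_cons, List.prod_cons, mul_assoc]
    rw [ih (fun k hk => h k (List.mem_cons_of_mem a hk)), ← mul_assoc,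
      h a List.mem_cons_self, mul_assoc]

/-- In the braid group `B_{n+1}` (generators `σ_1, …, σ_n`), the element
`D^n_1 U^n_1 = (σ_1 σ_2 ⋯ σ_n)(σ_n σ_{n-1} ⋯ σ_1)` commutes with every element of the subgroup
generated by `σ_2, …, σ_n`. -/
theorem stmt2 {G : Type*} [Group G] (n : ℕ) (σ : ℕ → G)
    (hcomm : ∀ i j, 1 ≤ i → i + 2 ≤ j → j ≤ n → σ i * σ j = σ j * σ i)
    (hbraid : ∀ i, 1 ≤ i → i + 1 ≤ n →
      σ i * σ (i + 1) * σ i = σ (i + 1) * σ i * σ (i + 1))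
    (D U : G) (hD : D = ((List.range' 1 n).map σ).prod)
    (hU : U = (((List.range' 1 n).reverse).map σ).prod) :
    ∀ x ∈ Subgroup.closure {g : G | ∃ j, 2 ≤ j ∧ j ≤ n ∧ g = σ j},
      x * (D * U) = (D * U) * x := by
  -- key lemma: for 2 ≤ j ≤ n, σ j * (D*U) = (D*U) * σ j
  have key : ∀ j, 2 ≤ j → j ≤ n → σ j * (D * U) = (D * U) * σ j := by
    intro j hj2 hjn
    obtain ⟨i, rfl⟩ : ∃ i, j = i + 1 := ⟨j - 1, by omega⟩
    have hi1 : 1 ≤ i := by omega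
    have hin : i + 1 ≤ n := hjn
    -- decompose range' 1 n
    have hsplit : List.range' 1 n = List.range' 1 (i-1) ++ [i, i+1] ++ List.range' (i+2) (n-i-1) := by
      have h1 : List.range' 1 (i-1) ++ List.range' i (n-(i-1)) = List.range' 1 n := by
        have := @List.range'_append 1 (i-1) (n-(i-1)) 1
        simp only [one_mul] at this
        rw [show 1 + (i-1) = i by omega] at this
        rw [this, show i - 1 + (n - (i-1)) = n by omega]
      have h2 : List.range' i (n-(i-1)) = [i, i+1] ++ List.range' (i+2) (n-i-1) := by
        have := @List.range'_append i 2 (n-i-1) 1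
        simp only [one_mul] at this
        rw [show i + 2 * 1 = i + 2 by ring] at this
        rw [show n - (i-1) = 2 + (n - i - 1) by omega, ← this]
        rfl
      rw [← h1, h2, List.append_assoc]
    set A := List.range' 1 (i-1) with hA
    set B := List.range' (i+2) (n-i-1) with hB
    have hAcomm : ∀ k ∈ A, σ k * σ (i+1) = σ (i+1) * σ k := by
      intro k hk
      rw [hA, List.mem_range'] at hk
      exact hcomm k (i+1) (by omega) (by omega) (by omega)
    have hBcomm : ∀ k ∈ B, σ k * σ i = σ i * σ k := by
      intro k hk
      rw [hB, List.mem_range'] at hk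
      exact (hcomm i k (by omega) (by omega) (by omega)).symm
    have hAcomm' : ∀ k ∈ A, σ (i+1) * σ k = σ k * σ (i+1) := fun k hk => (hAcomm k hk).symm
    have hBcomm' : ∀ k ∈ B, σ i * σ k = σ k * σ i := fun k hk => (hBcomm k hk).symm
    -- D step: σ(i+1) * D = D * σ i
    have hDstep : σ (i+1) * D = D * σ i := by
      rw [hD, hsplit]
      simp only [List.map_append, List.prod_append, List.map_cons, List.map_nil,
        List.prod_cons, List.prod_nil, mul_one]
      have c1 : σ (i+1) * (A.map σ).prod = (A.map σ).prod * σ (i+1) :=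
        (comm_prod σ (σ (i+1)) A hAcomm).symm
      have c2 : (B.map σ).prod * σ i = σ i * (B.map σ).prod :=
        comm_prod σ (σ i) B hBcomm
      calc σ (i+1) * ((A.map σ).prod * (σ i * σ (i+1)) * (B.map σ).prod)
          = (σ (i+1) * (A.map σ).prod) * (σ i * σ (i+1)) * (B.map σ).prod := by
            group
        _ = (A.map σ).prod * (σ (i+1) * σ i * σ (i+1)) * (B.map σ).prod := by
            rw [c1]; group
        _ = (A.map σ).prod * (σ i * σ (i+1) * σ i) * (B.map σ).prod := by
            rw [hbraid i hi1 hin]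
        _ = (A.map σ).prod * (σ i * σ (i+1)) * ((B.map σ).prod * σ i) := by
            rw [c2]; group
        _ = (A.map σ).prod * (σ i * σ (i+1)) * (B.map σ).prod * σ i := by group
    -- U step: U * σ(i+1) = σ i * U
    have hUstep : U * σ (i+1) = σ i * U := by
      rw [hU, hsplit]
      simp only [List.reverse_append, List.map_append, List.prod_append, List.map_reverse,
        List.reverse_cons, List.reverse_nil, List.nil_append, List.map_cons, List.map_nil,
        List.prod_cons, List.prod_nil, mul_one, List.map_append, List.prod_append]
      rw [show (A.map σ).reverse = A.reverse.map σ from List.map_reverse.symm,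
        show (B.map σ).reverse = B.reverse.map σ from List.map_reverse.symm]
      have c1 : (A.reverse.map σ).prod * σ (i+1) = σ (i+1) * (A.reverse.map σ).prod :=
        comm_prod σ (σ (i+1)) A.reverse (fun k hk => hAcomm k (List.mem_reverse.mp hk))
      have c2 : σ i * (B.reverse.map σ).prod = (B.reverse.map σ).prod * σ i :=
        (comm_prod σ (σ i) B.reverse (fun k hk => hBcomm k (List.mem_reverse.mp hk))).symm
      calc (B.reverse.map σ).prod * (σ (i+1) * σ i * (A.reverse.map σ).prod) * σ (i+1)
          = (B.reverse.map σ).prod * (σ (i+1) * σ i) * ((A.reverse.map σ).prod * σ (i+1)) := by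
            group
        _ = (B.reverse.map σ).prod * (σ (i+1) * σ i * σ (i+1)) * (A.reverse.map σ).prod := by
            rw [c1]; group
        _ = (B.reverse.map σ).prod * (σ i * σ (i+1) * σ i) * (A.reverse.map σ).prod := by
            rw [hbraid i hi1 hin]
        _ = (σ i * (B.reverse.map σ).prod) * (σ (i+1) * σ i) * (A.reverse.map σ).prod := by
            rw [c2]; group
        _ = σ i * ((B.reverse.map σ).prod * (σ (i+1) * σ i * (A.reverse.map σ).prod)) := by
            group
    calc σ (i+1) * (D * U) = (σ (i+1) * D) * U := by group
      _ = D * (σ i * U) := by rw [hDstep]; group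
      _ = D * (U * σ (i+1)) := by rw [hUstep]
      _ = (D * U) * σ (i+1) := by group
  intro x hx
  induction hx using Subgroup.closure_induction with
  | mem g hg =>
    obtain ⟨j, hj2, hjn, rfl⟩ := hg
    exact key j hj2 hjn
  | one => simp
  | mul a b _ _ ha hb =>
    rw [mul_assoc, hb, ← mul_assoc, ha, mul_assoc]
  | inv a _ ha =>
    calc a⁻¹ * (D * U) = a⁻¹ * ((D * U) * a) * a⁻¹ := by group
      _ = a⁻¹ * (a * (D * U)) * a⁻¹ := by rw [ha]
      _ = (D * U) * a⁻¹ := by group
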